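/- From any point (E,S) in 𝒳 and any target (E',S') ∈ 𝒳, there exists a strategy Š agreeing with S on any prescribed finite prefix of length k such that G_{f₀}^{k+m}(E,Š) = (E',S'), where m is the number of coordinates in which the state reached after k iterations differs from E'. In particular every point of 𝒳 is reachable from every open ball. -/

import Mathlib

open scoped BigOperators
open MeasureTheory ProbabilityTheory

namespace CI

/-- Strategies: sequences with values in {1,…,N}, encoded as `Fin N`. -/
abbrev Strat (N : ℕ) := ℕ → Fin N
/-- States of the system: boolean vectors of length N. -/
abbrev CState (N : ℕ) := Fin N → Bool
/-- The phase space 𝒳 = {1,…,N}^ℕ × 𝔹^N. -/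
abbrev Pt (N : ℕ) := Strat N × CState N

/-- d_e : sum of the discrete metric over the coordinates. -/
noncomputable def de {N : ℕ} (E F : CState N) : ℝ :=
  ∑ k : Fin N, if E k = F k then (0 : ℝ) else 1

/-- d_s(S,Š) = (9/N) Σ_{k≥1} |S^k − Š^k| / 10^k  (indices shifted to start at 0). -/
noncomputable def ds (N : ℕ) (S T : Strat N) : ℝ :=
  (9 / N) * ∑' k : ℕ, |((S k : ℝ)) - ((T k : ℝ))| / 10 ^ (k + 1)

/-- The distance d = d_e + d_s on 𝒳. -/
noncomputable def dC {N : ℕ} (p q : Pt N) : ℝ := de p.2 q.2 + ds N p.1 q.1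

/-- Flip bit k of the state E. -/
def bflip {N : ℕ} (k : Fin N) (E : CState N) : CState N :=
  fun j => if j = k then !(E j) else E j

/-- F_f(k,E): equal to E except possibly in coordinate k, where it is f(E)_k. -/
def Ff {N : ℕ} (f : CState N → CState N) (k : Fin N) (E : CState N) : CState N :=
  fun j => if j = k then f E k else E j

/-- The chaotic-iterations map G_f(S,E) = (σ(S), F_f(S^0,E)). -/
def Gf {N : ℕ} (f : CState N → CState N) (p : Pt N) : Pt N :=
  (fun n => p.1 (n + 1), Ff f (p.1 0) p.2)

/-- The vectorial negation f₀. -/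
def f0 {N : ℕ} (E : CState N) : CState N := fun j => !(E j)

/-- G_{f₀}. -/
def G0 {N : ℕ} : Pt N → Pt N := Gf f0

/-- Open ball for the distance dC. -/
def ballC {N : ℕ} (x : Pt N) (r : ℝ) : Set (Pt N) := {y | dC x y < r}

/-- Open sets of the metric space (𝒳,d). -/
def IsOpenC {N : ℕ} (U : Set (Pt N)) : Prop := ∀ x ∈ U, ∃ ε > 0, ballC x ε ⊆ U

/-- Iterating the flip-one-coordinate dynamics along a strategy. -/
def runCI {N : ℕ} (S : ℕ → Fin N) (E : CState N) : ℕ → CState N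
  | 0 => E
  | n + 1 => bflip (S n) (runCI S E n)

/-- The CIDS (cover-dependent) strategy: S^k = k if k ≤ N and X_k = 1, else S^k = 1
(indices encoded from 0, so "1" is `0 : Fin N`). -/
def cids {N : ℕ} [NeZero N] (X : CState N) : ℕ → Fin N :=
  fun k => if h : k < N then (if X ⟨k, h⟩ then ⟨k, h⟩ else 0) else 0


lemma G0_iter {N : ℕ} (n : ℕ) (T : Strat N) (E : CState N) :
    G0^[n] ((T, E) : Pt N) = (fun i => T (i + n), runCI T E n) := by
  induction n with
  | zero => simp [runCI]
  | succ n ih =>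
      rw [Function.iterate_succ_apply', ih]
      refine Prod.ext ?_ ?_
      · funext i
        show T ((i + 1) + n) = T (i + (n + 1))
        ring_nf
      · show Ff f0 (T (0 + n)) (runCI T E n) = runCI T E (n + 1)
        funext j
        simp [Ff, f0, runCI, bflip, Nat.zero_add]
        split <;> simp_all

lemma runCI_congr {N : ℕ} (n : ℕ) (T T' : Strat N) (E : CState N)
    (h : ∀ i < n, T i = T' i) : runCI T E n = runCI T' E n := by
  induction n with
  | zero => rfl
  | succ n ih =>
      simp only [runCI]
      rw [ih fun i hi => h i (by omega), h n (by omega)]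

lemma runCI_add {N : ℕ} (a b : ℕ) (T : Strat N) (E : CState N) :
    runCI T E (a + b) = runCI (fun i => T (a + i)) (runCI T E a) b := by
  induction b with
  | zero => rfl
  | succ b ih =>
      simp only [← Nat.add_assoc, runCI]
      show bflip (T (a + b)) (runCI T E (a + b)) = _
      rw [ih]

lemma reach {N : ℕ} [NeZero N] (m : ℕ) : ∀ F E' : CState N, hammingDist F E' = m →
    ∃ seq : Strat N, runCI seq F m = E' := by
  induction m with
  | zero =>
      intro F E' h
      exact ⟨fun _ => 0, hammingDist_eq_zero.mp h⟩
  | succ m ih =>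
      intro F E' h
      have hne : F ≠ E' := fun he => by simp [he] at h
      have : ∃ j, F j ≠ E' j := by
        by_contra hc
        push_neg at hc
        exact hne (funext hc)
      obtain ⟨j, hj⟩ := this
      have hdist : hammingDist (bflip j F) E' = m := by
        have hfe : (Finset.univ.filter fun i => bflip j F i ≠ E' i)
            = (Finset.univ.filter fun i => F i ≠ E' i).erase j := by
          ext i
          rw [Finset.mem_filter, Finset.mem_erase, Finset.mem_filter]
          simp only [Finset.mem_filter, Finset.mem_erase, Finset.mem_univ, true_and, bflip]
          constructor
          · intro hi
            rcases eq_or_ne i j with rfl | hij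
            · simp at hi; revert hi hj; cases F i <;> cases E' i <;> simp
            · simp [hij] at hi; exact ⟨hij, hi⟩
          · intro ⟨hij, hi⟩; simpa [hij]
        have hjmem : j ∈ Finset.univ.filter fun i => F i ≠ E' i := by simp [hj]
        have := Finset.card_erase_of_mem hjmem
        unfold hammingDist at h ⊢
        rw [hfe, this, h]; omega
      obtain ⟨seq', hseq'⟩ := ih (bflip j F) E' hdist
      refine ⟨fun i => if i = 0 then j else seq' (i - 1), ?_⟩
      have h1 : (1 : ℕ) + m = m + 1 := by omega
      rw [← h1, runCI_add]
      have : runCI (fun i => if i = 0 then j else seq' (i - 1)) F 1 = bflip j F := by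
        simp [runCI]
      rw [this]
      rw [runCI_congr m _ seq' _ (fun i hi => by simp)]
      exact hseq'


theorem stmt15 {N : ℕ} [NeZero N] (S S' : Strat N) (E E' : CState N) (k : ℕ) :
    ∃ Sh : Strat N, (∀ i < k, Sh i = S i) ∧
      G0^[k + hammingDist (G0^[k] ((Sh, E) : Pt N)).2 E'] ((Sh, E) : Pt N) = (S', E') := by
  set F := runCI S E k with hF
  set m := hammingDist F E' with hm
  obtain ⟨seq, hseq⟩ := reach m F E' rfl
  refine ⟨fun i => if i < k then S i else if i < k + m then seq (i - k) else S' (i - (k + m)),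
    fun i hi => by simp [hi], ?_⟩
  set Sh : Strat N := fun i => if i < k then S i else if i < k + m then seq (i - k)
    else S' (i - (k + m)) with hSh
  have hrun : runCI Sh E k = F := runCI_congr k Sh S E (fun i hi => by simp [hSh, hi])
  have hdk : (G0^[k] ((Sh, E) : Pt N)).2 = F := by rw [G0_iter]; exact hrun
  rw [hdk, ← hm, G0_iter]
  refine Prod.ext ?_ ?_
  · funext i
    show Sh (i + (k + m)) = S' i
    simp only [hSh]
    rw [if_neg (by omega), if_neg (by omega)]
    congr 1
    omega
  · show runCI Sh E (k + m) = E'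
    rw [runCI_add, hrun, runCI_congr m _ seq F (fun i hi => by
      simp only [hSh]
      rw [if_neg (by omega), if_pos (by omega)]
      congr 1
      omega)]
    exact hseq

end CI
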